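/- Every finite signed subset S of the integers (a set containing no pair {x, -x}) is the pinnacle set of some signed permutation; specifically, if m = max{|s| : s ∈ S}, then there exists w in the hyperoctahedral group B_{2m+1} whose pinnacle set equals S. -/

import Mathlib

/-- The pinnacle set of a word `w : Fin n → ℤ`: values `w i` (for `0 < i < n-1`)
strictly larger than both neighbors. -/
def PinSet (n : ℕ) (w : Fin n → ℤ) : Set ℤ :=
  {x | ∃ (i : ℕ) (h0 : 0 < i) (h2 : i + 1 < n),
    w ⟨i, by omega⟩ = x ∧ w ⟨i - 1, by omega⟩ < w ⟨i, by omega⟩ ∧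
      w ⟨i + 1, h2⟩ < w ⟨i, by omega⟩}

/-- `w : Fin n → ℤ` is the one-line notation of a signed permutation of rank `n`:
the absolute values of its entries are distinct elements of `{1,...,n}`
(hence a bijection onto `{1,...,n}`). -/
def IsSignedPerm (n : ℕ) (w : Fin n → ℤ) : Prop :=
  (∀ i, 1 ≤ |w i| ∧ |w i| ≤ (n : ℤ)) ∧ Function.Injective fun i => |w i|

/-- `S` is an admissible pinnacle set of the hyperoctahedral group `B_n`. -/
def APSB (n : ℕ) (S : Finset ℤ) : Prop :=
  ∃ w : Fin n → ℤ, IsSignedPerm n w ∧ PinSet n w = ↑S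

/-- `S` is an admissible pinnacle set of the type `D` group `D_n`
(signed permutations with an even number of negative one-line entries). -/
def APSD (n : ℕ) (S : Finset ℤ) : Prop :=
  ∃ w : Fin n → ℤ, IsSignedPerm n w ∧
    Even (Finset.univ.filter fun i => w i < 0).card ∧ PinSet n w = ↑S

/-- `S` is an admissible pinnacle set of the symmetric group `S_n`
(an unsigned permutation is a signed permutation with all entries positive). -/
def APSA (n : ℕ) (S : Finset ℤ) : Prop :=
  ∃ w : Fin n → ℤ, IsSignedPerm n w ∧ (∀ i, 0 < w i) ∧ PinSet n w = ↑S

/-- `T` is an admissible pinnacle set of the totally ordered finite set `X ⊆ ℤ`: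
it is the pinnacle set of some arrangement of the elements of `X`. -/
def APSOn (X : Finset ℤ) (T : Finset ℤ) : Prop :=
  ∃ w : Fin X.card → ℤ, Function.Injective w ∧ (∀ i, w i ∈ X) ∧
    PinSet X.card w = ↑T

theorem stmt0 (S : Finset ℤ) (hS : ∀ x ∈ S, -x ∉ S)
    (m : ℕ) (hm : m = S.sup fun s => s.natAbs) :
    ∃ w : Fin (2 * m + 1) → ℤ,
      IsSignedPerm (2 * m + 1) w ∧ PinSet (2 * m + 1) w = ↑S := by
  classical
  set k := S.card with hk
  have hS0 : ∀ s ∈ S, s ≠ 0 := by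
    intro s hs h0
    exact hS s hs (by rw [h0, neg_zero]; rwa [h0] at hs)
  have habs : ∀ s ∈ S, 1 ≤ |s| ∧ |s| ≤ (m : ℤ) := by
    intro s hs
    refine ⟨Int.one_le_abs (hS0 s hs), ?_⟩
    have h1 : s.natAbs ≤ m := hm ▸ Finset.le_sup hs
    rw [Int.abs_eq_natAbs]
    exact_mod_cast h1
  have hbound : ∀ s ∈ S, -(m : ℤ) ≤ s ∧ s ≤ (m : ℤ) := by
    intro s hs
    have := (habs s hs).2
    rw [abs_le] at this
    exact this
  have hinj : ∀ a ∈ S, ∀ b ∈ S, |a| = |b| → a = b := by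
    intro a ha b hb h
    rcases abs_eq_abs.1 h with h | h
    · exact h
    · subst h
      exact absurd hb (by simpa using hS _ ha)
  set A : Finset ℤ := S.image (fun s => |s|) with hA
  have hAcard : A.card = k := Finset.card_image_of_injOn (fun a ha b hb => hinj a ha b hb)
  have hAmem : ∀ x ∈ A, 1 ≤ x ∧ x ≤ (m : ℤ) := by
    intro x hx
    rcases Finset.mem_image.1 hx with ⟨s, hs, rfl⟩
    exact habs s hs
  have hkm : k ≤ m := by
    have hsub : A ⊆ Finset.Icc 1 (m : ℤ) := fun x hx => Finset.mem_Icc.2 (hAmem x hx)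
    have := Finset.card_le_card hsub
    rw [hAcard] at this
    simpa using this
  have hkmZ : (k : ℤ) ≤ m := by exact_mod_cast hkm
  set R : Finset ℤ := Finset.Icc (1 : ℤ) (2 * m - k) \ A with hR
  have hRcard : R.card = 2 * m - 2 * k := by
    rw [hR, Finset.card_sdiff_of_subset]
    · rw [hAcard, Int.card_Icc]
      omega
    · intro x hx
      have h1 := hAmem x hx
      refine Finset.mem_Icc.2 ⟨h1.1, ?_⟩
      have := h1.2
      push_cast
      omega
  set ps := S.sort (· ≤ ·) with hps
  set rs := R.sort (· ≤ ·) with hrs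
  have hpsl : ps.length = k := S.length_sort _
  have hrsl : rs.length = 2 * m - 2 * k := by rw [hrs, Finset.length_sort, hRcard]
  have hpsS : ∀ j, j < k → ps.getD j 0 ∈ S := by
    intro j hj
    rw [List.getD_eq_getElem _ _ (by omega)]
    exact (Finset.mem_sort _).1 (List.get_mem _ _)
  have hpsmono : ∀ a b, a < b → b < k → ps.getD a 0 < ps.getD b 0 := by
    intro a b hab hb
    rw [List.getD_eq_getElem _ _ (by omega), List.getD_eq_getElem _ _ (by omega)]
    exact (Finset.sortedLT_sort S).strictMono_get (by simpa using hab)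
  have hrsR : ∀ j, j < 2 * m - 2 * k → rs.getD j 0 ∈ R := by
    intro j hj
    rw [List.getD_eq_getElem _ _ (by omega)]
    exact (Finset.mem_sort _).1 (List.get_mem _ _)
  have hrsmono : ∀ a b, a < b → b < 2 * m - 2 * k → rs.getD a 0 < rs.getD b 0 := by
    intro a b hab hb
    rw [List.getD_eq_getElem _ _ (by omega), List.getD_eq_getElem _ _ (by omega)]
    exact (Finset.sortedLT_sort R).strictMono_get (by simpa using hab)
  have hrsb : ∀ j, j < 2 * m - 2 * k →
      (1 ≤ rs.getD j 0 ∧ rs.getD j 0 ≤ 2 * (m : ℤ) - k) ∧ rs.getD j 0 ∉ A := by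
    intro j hj
    have := hrsR j hj
    rw [hR, Finset.mem_sdiff, Finset.mem_Icc] at this
    exact this
  -- the word
  set w : Fin (2 * m + 1) → ℤ := fun i =>
    if i.1 % 2 = 1 ∧ i.1 < 2 * k then ps.getD (i.1 / 2) 0
    else if i.1 ≤ 2 * k then ((i.1 / 2 : ℕ) : ℤ) - (2 * m + 1)
    else -(rs.getD (2 * m - i.1) 0) with hwdef
  have hw1 : ∀ (i : ℕ) (h : i < 2 * m + 1), i % 2 = 1 → i < 2 * k →
      w ⟨i, h⟩ = ps.getD (i / 2) 0 := by
    intro i h h1 h2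
    rw [hwdef]
    exact if_pos ⟨h1, h2⟩
  have hw2 : ∀ (i : ℕ) (h : i < 2 * m + 1), i % 2 = 0 → i ≤ 2 * k →
      w ⟨i, h⟩ = ((i / 2 : ℕ) : ℤ) - (2 * m + 1) := by
    intro i h h1 h2
    rw [hwdef]
    simp only
    rw [if_neg (by omega), if_pos h2]
  have hw3 : ∀ (i : ℕ) (h : i < 2 * m + 1), 2 * k < i →
      w ⟨i, h⟩ = -(rs.getD (2 * m - i) 0) := by
    intro i h h1
    rw [hwdef]
    simp only
    rw [if_neg (by omega), if_neg (by omega)]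
  -- pinnacle entries
  have hPmem : ∀ (i : ℕ) (h : i < 2 * m + 1), i % 2 = 1 → i < 2 * k →
      w ⟨i, h⟩ ∈ S := by
    intro i h h1 h2
    rw [hw1 i h h1 h2]
    exact hpsS _ (by omega)
  -- filler entries bounds
  have hFb : ∀ (i : ℕ) (h : i < 2 * m + 1), i % 2 = 0 → i ≤ 2 * k →
      -(2 * (m : ℤ) + 1) ≤ w ⟨i, h⟩ ∧ w ⟨i, h⟩ ≤ -((m : ℤ) + 1) := by
    intro i h h1 h2
    rw [hw2 i h h1 h2]
    have hik : i / 2 ≤ k := by omega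
    have h5 : ((i / 2 : ℕ) : ℤ) ≤ (k : ℤ) := by exact_mod_cast hik
    have h6 : (0 : ℤ) ≤ ((i / 2 : ℕ) : ℤ) := by positivity
    omega
  -- tail entries bounds
  have hTb : ∀ (i : ℕ) (h : i < 2 * m + 1), 2 * k < i →
      (-(2 * (m : ℤ) - k) ≤ w ⟨i, h⟩ ∧ w ⟨i, h⟩ ≤ -1) ∧ |w ⟨i, h⟩| ∉ A := by
    intro i h h1
    have hidx : 2 * m - i < 2 * m - 2 * k := by omega
    have hb := hrsb _ hidx
    rw [hw3 i h h1]
    refine ⟨⟨by omega, by omega⟩, ?_⟩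
    rw [abs_neg, abs_of_pos (by omega)]
    exact hb.2
  refine ⟨w, ⟨?_, ?_⟩, ?_⟩
  · -- bounds on |w i|
    rintro ⟨i, h⟩
    rcases (by omega : (i % 2 = 1 ∧ i < 2 * k) ∨ (i % 2 = 0 ∧ i ≤ 2 * k) ∨ 2 * k < i) with
      ⟨h1, h2⟩ | ⟨h1, h2⟩ | h1
    · have hs := habs _ (hPmem i h h1 h2)
      refine ⟨hs.1, ?_⟩
      have := hs.2
      push_cast
      omega
    · have := hFb i h h1 h2
      rw [abs_of_neg (by omega)]
      push_cast
      omega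
    · have := hTb i h h1
      rw [abs_of_neg (by omega)]
      push_cast
      omega
  · -- injectivity of absolute values
    rintro ⟨a, hfa⟩ ⟨b, hfb⟩ hab
    replace hab : |w ⟨a, hfa⟩| = |w ⟨b, hfb⟩| := hab
    have hPa : ∀ (i : ℕ) (h : i < 2 * m + 1), i % 2 = 1 → i < 2 * k →
        |w ⟨i, h⟩| ∈ A ∧ |w ⟨i, h⟩| ≤ (m : ℤ) := by
      intro i h h1 h2
      have hi := hPmem i h h1 h2
      exact ⟨Finset.mem_image_of_mem _ hi, (habs _ hi).2⟩
    have hFa : ∀ (i : ℕ) (h : i < 2 * m + 1), i % 2 = 0 → i ≤ 2 * k →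
        |w ⟨i, h⟩| = 2 * (m : ℤ) + 1 - ((i / 2 : ℕ) : ℤ) ∧
          2 * (m : ℤ) + 1 - k ≤ |w ⟨i, h⟩| := by
      intro i h h1 h2
      have hb := hFb i h h1 h2
      have h4 : ((i / 2 : ℕ) : ℤ) ≤ (k : ℤ) := by exact_mod_cast (by omega : i / 2 ≤ k)
      rw [abs_of_neg (by omega), hw2 i h h1 h2]
      constructor
      · ring
      · omega
    have hTa : ∀ (i : ℕ) (h : i < 2 * m + 1), 2 * k < i →
        |w ⟨i, h⟩| ∉ A ∧ |w ⟨i, h⟩| ≤ 2 * (m : ℤ) - k := by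
      intro i h h1
      have hb := hTb i h h1
      refine ⟨hb.2, ?_⟩
      rw [abs_of_neg (by omega)]
      omega
    rcases (by omega : (a % 2 = 1 ∧ a < 2 * k) ∨ (a % 2 = 0 ∧ a ≤ 2 * k) ∨ 2 * k < a) with
      ⟨a1, a2⟩ | ⟨a1, a2⟩ | a1 <;>
    rcases (by omega : (b % 2 = 1 ∧ b < 2 * k) ∨ (b % 2 = 0 ∧ b ≤ 2 * k) ∨ 2 * k < b) with
      ⟨b1, b2⟩ | ⟨b1, b2⟩ | b1
    · -- pinnacle / pinnacle
      rw [hw1 a hfa a1 a2, hw1 b hfb b1 b2] at hab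
      have ha := hpsS (a / 2) (by omega)
      have hb := hpsS (b / 2) (by omega)
      have heq : ps.getD (a / 2) 0 = ps.getD (b / 2) 0 := hinj _ ha _ hb hab
      have : a / 2 = b / 2 := by
        by_contra hne
        rcases Nat.lt_or_ge (a / 2) (b / 2) with h | h
        · exact absurd heq (ne_of_lt (hpsmono _ _ h (by omega)))
        · exact absurd heq.symm (ne_of_lt (hpsmono _ _ (by omega) (by omega)))
      exact Fin.mk_eq_mk.mpr (by omega)
    · exact absurd hab (by
        have := (hPa a hfa a1 a2).2; have := (hFa b hfb b1 b2).2; omega)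
    · exact absurd hab (by
        have h1 := (hPa a hfa a1 a2).1
        have h2 := (hTa b hfb b1).1
        intro h; rw [h] at h1; exact h2 h1)
    · exact absurd hab (by
        have := (hPa b hfb b1 b2).2; have := (hFa a hfa a1 a2).2; omega)
    · -- filler / filler
      have ha := (hFa a hfa a1 a2).1
      have hb := (hFa b hfb b1 b2).1
      rw [ha, hb] at hab
      have h5 : ((a / 2 : ℕ) : ℤ) = ((b / 2 : ℕ) : ℤ) := by omega
      have : a / 2 = b / 2 := by exact_mod_cast h5
      exact Fin.mk_eq_mk.mpr (by omega)
    · exact absurd hab (by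
        have h1 := (hFa a hfa a1 a2).2
        have h2 := (hTa b hfb b1).2
        omega)
    · exact absurd hab (by
        have h1 := (hPa b hfb b1 b2).1
        have h2 := (hTa a hfa a1).1
        intro h; rw [← h] at h1; exact h2 h1)
    · exact absurd hab (by
        have h1 := (hFa b hfb b1 b2).2
        have h2 := (hTa a hfa a1).2
        omega)
    · -- tail / tail
      rw [hw3 a hfa a1, hw3 b hfb b1, abs_neg, abs_neg] at hab
      have hia : 2 * m - a < 2 * m - 2 * k := by omega
      have hib : 2 * m - b < 2 * m - 2 * k := by omega
      have hpa := (hrsb _ hia).1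
      have hpb := (hrsb _ hib).1
      rw [abs_of_pos (by omega), abs_of_pos (by omega)] at hab
      have : 2 * m - a = 2 * m - b := by
        by_contra hne
        rcases Nat.lt_or_ge (2 * m - a) (2 * m - b) with h | h
        · exact absurd hab (ne_of_lt (hrsmono _ _ h hib))
        · exact absurd hab.symm (ne_of_lt (hrsmono _ _ (by omega) hia))
      exact Fin.mk_eq_mk.mpr (by omega)
  · -- PinSet = S
    ext x
    simp only [PinSet, Set.mem_setOf_eq, Finset.coe_sort_coe, Finset.mem_coe]
    constructor
    · rintro ⟨i, h0, h2, heq, hl, hr⟩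
      rcases (by omega : (i % 2 = 1 ∧ i < 2 * k) ∨ (i % 2 = 0 ∧ i ≤ 2 * k) ∨ 2 * k < i) with
        ⟨h1, hlt⟩ | ⟨h1, hle⟩ | hgt
      · rw [← heq]
        exact hPmem i (by omega) h1 hlt
      · -- filler cannot be a pinnacle
        exfalso
        have hfb := hFb i (by omega) h1 hle
        rcases Nat.lt_or_ge i (2 * k) with hc | hc
        · -- next entry is a pinnacle
          have hp := hbound _ (hPmem (i + 1) h2 (by omega) (by omega))
          rw [hw2 i (by omega) h1 hle] at hr
          have h5 : ((i / 2 : ℕ) : ℤ) ≤ (k : ℤ) := by exact_mod_cast (by omega : i / 2 ≤ k)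
          omega
        · -- i = 2k, next entry is tail
          have hieq : i = 2 * k := by omega
          have hkm' : k < m := by omega
          have ht := (hTb (i + 1) h2 (by omega)).1
          rw [hw2 i (by omega) h1 hle] at hr
          have h5 : ((i / 2 : ℕ) : ℤ) = (k : ℤ) := by exact_mod_cast (by omega : i / 2 = k)
          omega
      · -- tail entries are increasing
        exfalso
        rw [hw3 i (by omega) hgt, hw3 (i + 1) h2 (by omega)] at hr
        have hlt2 : 2 * m - (i + 1) < 2 * m - i := by omega
        have hmono := hrsmono _ _ hlt2 (by omega)
        omega
    · intro hx
      have hxmem : x ∈ ps := (Finset.mem_sort _).2 hx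
      rcases List.mem_iff_get.1 hxmem with ⟨⟨j, hj⟩, hjx⟩
      have hjk : j < k := by omega
      have hxb := hbound _ hx
      have hxv : ∀ (h : 2 * j + 1 < 2 * m + 1), w ⟨2 * j + 1, h⟩ = x := by
        intro h
        rw [hw1 (2 * j + 1) h (by omega) (by omega)]
        have h6 : (2 * j + 1) / 2 = j := by omega
        rw [h6, List.getD_eq_getElem _ _ (by omega)]
        exact hjx
      refine ⟨2 * j + 1, by omega, by omega, hxv _, ?_, ?_⟩
      · -- left neighbor
        rw [hxv _, hw2 (2 * j + 1 - 1) (by omega) (by omega) (by omega)]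
        have h5 : (((2 * j + 1 - 1) / 2 : ℕ) : ℤ) < (k : ℤ) :=
          by exact_mod_cast (by omega : (2 * j + 1 - 1) / 2 < k)
        omega
      · -- right neighbor
        rw [hxv _, hw2 (2 * j + 1 + 1) (by omega) (by omega) (by omega)]
        have h5 : (((2 * j + 1 + 1) / 2 : ℕ) : ℤ) ≤ (k : ℤ) :=
          by exact_mod_cast (by omega : (2 * j + 1 + 1) / 2 ≤ k)
        omega
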